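/- One-step progress in terms of the new (sub)gradient: let f : E → ℝ be twice continuously differentiable with L-Lipschitz-continuous Hessian (L > 0), ψ : E → ℝ convex, x ∈ E, s a subgradient of ψ at x, H symmetric positive semidefinite with ‖H − ∇²f(x)‖ ≤ β for some β ≥ 0, and α ≥ √(L‖∇f(x) + s‖/2) + β with α > 0. If x⁺ is a composite step from x with parameters (H, α), then F(x) − F(x⁺) ≥ ‖F'(x⁺)‖²/(8α), where F := f + ψ and F'(x⁺) := ∇f(x⁺) − ∇f(x) − (H + αI)(x⁺ − x). -/

import Mathlib

open scoped RealInnerProductSpace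
open Real Set

def IsSymmPSD {n : ℕ} (H : EuclideanSpace ℝ (Fin n) →L[ℝ] EuclideanSpace ℝ (Fin n)) : Prop :=
  (∀ u v, ⟪H u, v⟫ = ⟪u, H v⟫) ∧ ∀ u, 0 ≤ ⟪H u, u⟫

def IsSubgradAt {n : ℕ} (ψ : EuclideanSpace ℝ (Fin n) → ℝ)
    (s x : EuclideanSpace ℝ (Fin n)) : Prop :=
  ∀ y, ψ x + ⟪s, y - x⟫ ≤ ψ y

def CompositeStep {n : ℕ} (g : EuclideanSpace ℝ (Fin n))
    (H : EuclideanSpace ℝ (Fin n) →L[ℝ] EuclideanSpace ℝ (Fin n)) (α : ℝ)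
    (ψ : EuclideanSpace ℝ (Fin n) → ℝ) (x xp : EuclideanSpace ℝ (Fin n)) : Prop :=
  ∀ y, ψ xp ≤ ⟪g + (H (xp - x) + α • (xp - x)), y - xp⟫ + ψ y

noncomputable def hess {n : ℕ} (f : EuclideanSpace ℝ (Fin n) → ℝ)
    (x : EuclideanSpace ℝ (Fin n)) :
    EuclideanSpace ℝ (Fin n) →L[ℝ] EuclideanSpace ℝ (Fin n) :=
  fderiv ℝ (gradient f) x


section Aux

open InnerProductSpace

private lemma grad_contDiff' {n : ℕ} (f : EuclideanSpace ℝ (Fin n) → ℝ) (hf : ContDiff ℝ 2 f) :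
    ContDiff ℝ 1 (gradient f) := by
  have h1 : ContDiff ℝ 1 (fderiv ℝ f) := hf.fderiv_right (by norm_num)
  exact ((InnerProductSpace.toDual ℝ _).symm.contDiff).comp h1

private lemma grad_hasFDerivAt' {n : ℕ} (f : EuclideanSpace ℝ (Fin n) → ℝ) (hf : ContDiff ℝ 2 f)
    (y : EuclideanSpace ℝ (Fin n)) : HasFDerivAt (gradient f) (hess f y) y :=
  ((grad_contDiff' f hf).differentiable (by norm_num) y).hasFDerivAt

private lemma line_hasDerivAt' {n : ℕ} (x r : EuclideanSpace ℝ (Fin n)) (t : ℝ) :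
    HasDerivAt (fun t : ℝ => x + t • r) r t := by
  simpa using ((hasDerivAt_id t).smul_const r).const_add x

/-- Taylor bound for the gradient under Lipschitz Hessian. -/
private lemma taylor_grad' {n : ℕ} (f : EuclideanSpace ℝ (Fin n) → ℝ) (hf : ContDiff ℝ 2 f)
    (L : ℝ) (hLip : ∀ a b, ‖hess f a - hess f b‖ ≤ L * ‖a - b‖)
    (x r : EuclideanSpace ℝ (Fin n)) :
    ∀ t ∈ Icc (0:ℝ) 1,
      ‖gradient f (x + t • r) - gradient f x - t • (hess f x r)‖ ≤ L * ‖r‖^2 / 2 * t^2 := by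
  set g : ℝ → EuclideanSpace ℝ (Fin n) :=
    fun t => gradient f (x + t • r) - gradient f x - t • (hess f x r) with hg
  have hg' : ∀ t : ℝ, HasDerivAt g (hess f (x + t • r) r - hess f x r) t := by
    intro t
    have h1 : HasDerivAt (fun t : ℝ => gradient f (x + t • r)) (hess f (x + t • r) r) t :=
      (grad_hasFDerivAt' f hf (x + t • r)).comp_hasDerivAt (f := fun t : ℝ => x + t • r) t
        (line_hasDerivAt' x r t)
    have h2 : HasDerivAt (fun t : ℝ => t • (hess f x r)) (hess f x r) t := by
      simpa using (hasDerivAt_id t).smul_const (hess f x r)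
    exact (h1.sub_const (gradient f x)).sub h2
  have hcont : ContinuousOn g (Icc 0 1) :=
    (fun t _ => ((hg' t).continuousAt.continuousWithinAt))
  have hB : ∀ t : ℝ, HasDerivAt (fun t : ℝ => L * ‖r‖^2 / 2 * t^2) (L * ‖r‖^2 * t) t := by
    intro t
    have := (hasDerivAt_pow 2 t).const_mul (L * ‖r‖^2 / 2)
    refine this.congr_deriv ?_
    push_cast
    ring
  have bound : ∀ t ∈ Ico (0:ℝ) 1, ‖hess f (x + t • r) r - hess f x r‖ ≤ L * ‖r‖^2 * t := by
    intro t ht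
    have e : hess f (x + t • r) r - hess f x r = (hess f (x + t • r) - hess f x) r := rfl
    rw [e]
    calc ‖(hess f (x + t • r) - hess f x) r‖
        ≤ ‖hess f (x + t • r) - hess f x‖ * ‖r‖ := ContinuousLinearMap.le_opNorm _ _
      _ ≤ (L * ‖x + t • r - x‖) * ‖r‖ := by
          gcongr; exact hLip _ _
      _ = L * ‖r‖^2 * t := by
          rw [add_sub_cancel_left, norm_smul, Real.norm_eq_abs, abs_of_nonneg ht.1]
          ring
  have h0 : ‖g 0‖ ≤ L * ‖r‖^2 / 2 * (0:ℝ)^2 := by simp [hg]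
  intro t ht
  exact image_norm_le_of_norm_deriv_right_le_deriv_boundary hcont
    (fun s _ => (hg' s).hasDerivWithinAt) h0 hB bound ht

private lemma f_line_hasDerivAt' {n : ℕ} (f : EuclideanSpace ℝ (Fin n) → ℝ)
    (hf : ContDiff ℝ 2 f) (x r : EuclideanSpace ℝ (Fin n)) (t : ℝ) :
    HasDerivAt (fun t : ℝ => f (x + t • r)) ⟪gradient f (x + t • r), r⟫ t := by
  have hd : DifferentiableAt ℝ f (x + t • r) :=
    (hf.differentiable (by norm_num)).differentiableAt
  have hg : HasFDerivAt f (InnerProductSpace.toDual ℝ _ (gradient f (x + t • r))) (x + t • r) :=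
    hd.hasGradientAt.hasFDerivAt
  simpa [Function.comp_def] using hg.comp_hasDerivAt t (line_hasDerivAt' x r t)

/-- Second-order Taylor bound for the function value under Lipschitz Hessian. -/
private lemma taylor_f' {n : ℕ} (f : EuclideanSpace ℝ (Fin n) → ℝ) (hf : ContDiff ℝ 2 f)
    (L : ℝ) (hL : 0 < L) (hLip : ∀ a b, ‖hess f a - hess f b‖ ≤ L * ‖a - b‖)
    (x r : EuclideanSpace ℝ (Fin n)) :
    f (x + r) ≤ f x + ⟪gradient f x, r⟫ + ⟪hess f x r, r⟫ / 2 + L * ‖r‖^3 / 6 := by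
  set u : ℝ → ℝ := fun t =>
    f x + t * ⟪gradient f x, r⟫ + t^2 / 2 * ⟪hess f x r, r⟫ + L * ‖r‖^3 / 6 * t^3
      - f (x + t • r) with hu
  have hu' : ∀ t : ℝ, HasDerivAt u
      (⟪gradient f x, r⟫ + t * ⟪hess f x r, r⟫ + L * ‖r‖^3 / 2 * t^2
        - ⟪gradient f (x + t • r), r⟫) t := by
    intro t
    have h1 : HasDerivAt (fun t : ℝ =>
        f x + t * ⟪gradient f x, r⟫ + t^2 / 2 * ⟪hess f x r, r⟫ + L * ‖r‖^3 / 6 * t^3)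
        (⟪gradient f x, r⟫ + t * ⟪hess f x r, r⟫ + L * ‖r‖^3 / 2 * t^2) t := by
      have p1 := (hasDerivAt_id t).mul_const ⟪gradient f x, r⟫
      have p2 := ((hasDerivAt_pow 2 t).div_const 2).mul_const ⟪hess f x r, r⟫
      have p3 := (hasDerivAt_pow 3 t).const_mul (L * ‖r‖^3 / 6)
      have := ((p1.const_add (f x)).add p2).add p3
      refine this.congr_deriv ?_
      push_cast
      ring
    exact h1.sub (f_line_hasDerivAt' f hf x r t)
  have hmono : MonotoneOn u (Icc (0:ℝ) 1) := by
    apply monotoneOn_of_deriv_nonneg (convex_Icc 0 1)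
    · exact fun t _ => ((hu' t).continuousAt.continuousWithinAt)
    · intro t _
      exact ((hu' t).differentiableAt).differentiableWithinAt
    · intro t ht
      rw [interior_Icc] at ht
      rw [(hu' t).deriv]
      have hT := taylor_grad' f hf L hLip x r t ⟨le_of_lt ht.1, le_of_lt ht.2⟩
      have hinner : ⟪gradient f (x + t • r) - gradient f x - t • (hess f x r), r⟫
          ≤ L * ‖r‖^2 / 2 * t^2 * ‖r‖ :=
        le_trans (real_inner_le_norm _ _) (by gcongr)
      have hexp : ⟪gradient f (x + t • r) - gradient f x - t • (hess f x r), r⟫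
          = ⟪gradient f (x + t • r), r⟫ - ⟪gradient f x, r⟫ - t * ⟪hess f x r, r⟫ := by
        rw [inner_sub_left, inner_sub_left, real_inner_smul_left]
      rw [hexp] at hinner
      nlinarith [hinner]
  have := hmono (left_mem_Icc.mpr zero_le_one) (right_mem_Icc.mpr zero_le_one) zero_le_one
  simp only [hu] at this
  simp only [zero_smul, add_zero, one_smul, zero_pow, one_pow] at this
  nlinarith [this]

/-- The purely scalar part of the argument. -/
private lemma scalar_main' (L G ρ α β D P : ℝ) (hL : 0 < L) (hβ : 0 ≤ β) (hαpos : 0 < α)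
    (hβα : β ≤ α) (hGnn : 0 ≤ G) (hρpos : 0 < ρ)
    (hsq : L * G / 2 ≤ (α - β)^2) (hρG : α * ρ^2 ≤ G * ρ)
    (hP : P ≤ L * ρ^2 / 2 + β * ρ + α * ρ) (hPnn : 0 ≤ P)
    (hD : α * ρ^2 - β * ρ^2 / 2 - L * ρ^3 / 6 ≤ D) :
    P^2 / (8 * α) ≤ D := by
  have hαρ : α * ρ ≤ G := by nlinarith
  have h3 : L * (α * ρ) / 2 ≤ (α - β)^2 := by nlinarith
  have h4 : 0 < α - β := by
    rcases eq_or_lt_of_le (by linarith : (0:ℝ) ≤ α - β) with h | h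
    · exfalso; rw [← h] at h3; norm_num at h3; nlinarith [mul_pos hL (mul_pos hαpos hρpos)]
    · exact h
  have hc : L * ρ / 2 ≤ α - β := by nlinarith
  have hP2 : P ≤ 2 * α * ρ := by nlinarith
  have hD2 : α * ρ^2 / 2 ≤ D := by nlinarith
  have hPsq : P^2 ≤ (2 * α * ρ)^2 := by nlinarith
  rw [div_le_iff₀ (by positivity)]
  nlinarith

end Aux

/-- One-step progress in terms of the new (sub)gradient
`F'(x⁺) = ∇f(x⁺) − ∇f(x) − (H + αI)(x⁺ − x)`:
`F(x) − F(x⁺) ≥ ‖F'(x⁺)‖²/(8α)` where `F = f + ψ`. -/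
theorem composite_step_one_step_progress {n : ℕ}
    (f : EuclideanSpace ℝ (Fin n) → ℝ) (hf : ContDiff ℝ 2 f)
    (L : ℝ) (hL : 0 < L)
    (hLip : ∀ x y, ‖hess f x - hess f y‖ ≤ L * ‖x - y‖)
    (ψ : EuclideanSpace ℝ (Fin n) → ℝ) (hψ : ConvexOn ℝ Set.univ ψ)
    (x xp s : EuclideanSpace ℝ (Fin n)) (hs : IsSubgradAt ψ s x)
    (H : EuclideanSpace ℝ (Fin n) →L[ℝ] EuclideanSpace ℝ (Fin n)) (hH : IsSymmPSD H)
    (β : ℝ) (hβ : 0 ≤ β) (hHerr : ‖H - hess f x‖ ≤ β)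
    (α : ℝ) (hαpos : 0 < α)
    (hα : Real.sqrt (L * ‖gradient f x + s‖ / 2) + β ≤ α)
    (hstep : CompositeStep (gradient f x) H α ψ x xp) :
    ‖gradient f xp - gradient f x - (H (xp - x) + α • (xp - x))‖ ^ 2 / (8 * α)
      ≤ (f x + ψ x) - (f xp + ψ xp) := by
  set g := gradient f x with hgdef
  set A := hess f x with hAdef
  set r := xp - x with hrdef
  set ρ := ‖r‖ with hρdef
  set G := ‖g + s‖ with hGdef
  have hβα : β ≤ α := le_trans (le_add_of_nonneg_left (Real.sqrt_nonneg _)) hα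
  have hGnn : (0:ℝ) ≤ G := norm_nonneg _
  have hρnn : (0:ℝ) ≤ ρ := norm_nonneg _
  have hsq : L * G / 2 ≤ (α - β)^2 := by
    have h1 : Real.sqrt (L * G / 2) ≤ α - β := by linarith
    have h2 : Real.sqrt (L * G / 2) ^ 2 ≤ (α - β)^2 :=
      pow_le_pow_left₀ (Real.sqrt_nonneg _) h1 2
    rwa [Real.sq_sqrt (by positivity)] at h2
  have h1 : ψ xp - ψ x ≤ -⟪g + (H r + α • r), r⟫ := by
    have := hstep x
    have hx : x - xp = -r := by rw [hrdef]; abel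
    rw [hx, inner_neg_right] at this
    linarith
  have hHr : (0:ℝ) ≤ ⟪H r, r⟫ := hH.2 r
  have hrr : ⟪r, r⟫ = ρ^2 := real_inner_self_eq_norm_sq r
  have hexp : ⟪g + (H r + α • r), r⟫ = ⟪g, r⟫ + ⟪H r, r⟫ + α * ρ^2 := by
    rw [inner_add_left, inner_add_left, real_inner_smul_left, hrr]; ring
  rw [hexp] at h1
  have hpsi : ⟪g, r⟫ + ⟪H r, r⟫ + α * ρ^2 ≤ ψ x - ψ xp := by linarith
  have hsub : ψ x + ⟪s, r⟫ ≤ ψ xp := by simpa [hrdef] using hs xp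
  have hgs : ⟪g + s, r⟫ = ⟪g, r⟫ + ⟪s, r⟫ := inner_add_left _ _ _
  have hρG : α * ρ^2 ≤ G * ρ := by
    have habs := neg_le_of_abs_le (abs_real_inner_le_norm (g + s) r)
    rw [hgs] at habs
    linarith
  have hxpr : x + r = xp := by rw [hrdef]; abel
  have hT2 : ‖gradient f xp - g - A r‖ ≤ L * ρ^2 / 2 := by
    have := taylor_grad' f hf L hLip x r 1 (by norm_num)
    rw [one_smul, one_smul, hxpr] at this
    simpa using this
  have hT1 : f xp ≤ f x + ⟪g, r⟫ + ⟪A r, r⟫ / 2 + L * ρ^3 / 6 := by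
    have := taylor_f' f hf L hL hLip x r
    rwa [hxpr] at this
  rcases eq_or_lt_of_le hρnn with hρ0 | hρpos
  · have hr0 : r = 0 := by rw [← norm_eq_zero, ← hρdef, ← hρ0]
    have hxx : xp = x := by
      have := hrdef ▸ hr0
      exact sub_eq_zero.mp this
    rw [hr0, hxx]
    simp [hgdef]
  · have hHA : ‖(H - A) r‖ ≤ β * ρ := by
      calc ‖(H - A) r‖ ≤ ‖H - A‖ * ρ := ContinuousLinearMap.le_opNorm _ _
        _ ≤ β * ρ := by gcongr
    have hαr : ‖α • r‖ = α * ρ := by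
      rw [norm_smul, Real.norm_eq_abs, abs_of_pos hαpos]
    have hP : ‖gradient f xp - g - (H r + α • r)‖ ≤ L * ρ^2 / 2 + β * ρ + α * ρ := by
      have e : gradient f xp - g - (H r + α • r)
          = (gradient f xp - g - A r) - (H - A) r - α • r := by
        have h : (H - A) r = H r - A r := rfl
        rw [h]; abel
      rw [e]
      calc ‖(gradient f xp - g - A r) - (H - A) r - α • r‖
          ≤ ‖(gradient f xp - g - A r) - (H - A) r‖ + ‖α • r‖ := norm_sub_le _ _
        _ ≤ ‖gradient f xp - g - A r‖ + ‖(H - A) r‖ + ‖α • r‖ := by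
            linarith [norm_sub_le (gradient f xp - g - A r) ((H - A) r)]
        _ ≤ L * ρ^2 / 2 + β * ρ + α * ρ := by rw [hαr]; linarith
    have hHAr : -(β * ρ^2) ≤ ⟪H r, r⟫ - ⟪A r, r⟫ := by
      have e : ⟪(H - A) r, r⟫ = ⟪H r, r⟫ - ⟪A r, r⟫ := by
        have h : (H - A) r = H r - A r := rfl
        rw [h, inner_sub_left]
      have habs := neg_le_of_abs_le (abs_real_inner_le_norm ((H - A) r) r)
      have hn : ‖(H - A) r‖ * ‖r‖ ≤ β * ρ^2 := by
        calc ‖(H - A) r‖ * ‖r‖ ≤ (β * ρ) * ρ := by gcongr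
          _ = β * ρ^2 := by ring
      rw [e] at habs
      linarith
    have hD : α * ρ^2 - β * ρ^2 / 2 - L * ρ^3 / 6 ≤ (f x + ψ x) - (f xp + ψ xp) := by
      linarith
    exact scalar_main' L G ρ α β _ _ hL hβ hαpos hβα hGnn hρpos hsq hρG hP
      (norm_nonneg _) hD
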